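/- Let τ ≥ 1 be an integer and let N = ⟨6, 1+6τ, 2+6τ, 3+6τ, 4+6τ⟩ be the additive submonoid of ℕ generated by these five numbers. Then N admits the disjoint decomposition N = 6ℕ ⊔ (1+6τ+6ℕ) ⊔ (2+6τ+6ℕ) ⊔ (3+6τ+6ℕ) ⊔ (4+6τ+6ℕ) ⊔ (5+12τ+6ℕ), where a+6ℕ denotes {a+6k : k ∈ ℕ}. -/

import Mathlib

/-- For `τ ≥ 1`, the submonoid `N = ⟨6, 1+6τ, 2+6τ, 3+6τ, 4+6τ⟩ ⊆ ℕ` admits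
the disjoint decomposition
`N = 6ℕ ⊔ (1+6τ+6ℕ) ⊔ (2+6τ+6ℕ) ⊔ (3+6τ+6ℕ) ⊔ (4+6τ+6ℕ) ⊔ (5+12τ+6ℕ)`. -/
theorem decomposition_family_two (τ : ℕ) (hτ : 1 ≤ τ)
    (f : Fin 6 → Set ℕ)
    (hf : f = ![{x : ℕ | ∃ k : ℕ, x = 6 * k},
                {x : ℕ | ∃ k : ℕ, x = 1 + 6 * τ + 6 * k},
                {x : ℕ | ∃ k : ℕ, x = 2 + 6 * τ + 6 * k},
                {x : ℕ | ∃ k : ℕ, x = 3 + 6 * τ + 6 * k},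
                {x : ℕ | ∃ k : ℕ, x = 4 + 6 * τ + 6 * k},
                {x : ℕ | ∃ k : ℕ, x = 5 + 12 * τ + 6 * k}]) :
    (AddSubmonoid.closure ({6, 1 + 6 * τ, 2 + 6 * τ, 3 + 6 * τ, 4 + 6 * τ} : Set ℕ) : Set ℕ)
        = ⋃ i, f i ∧
      Pairwise (Function.onFun Disjoint f) := by
  subst hf
  set S : Set ℕ := {6, 1 + 6 * τ, 2 + 6 * τ, 3 + 6 * τ, 4 + 6 * τ} with hS
  have h6 : (6 : ℕ) ∈ AddSubmonoid.closure S := AddSubmonoid.subset_closure (by simp [hS])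
  have h1 : (1 + 6 * τ) ∈ AddSubmonoid.closure S := AddSubmonoid.subset_closure (by simp [hS])
  have h2 : (2 + 6 * τ) ∈ AddSubmonoid.closure S := AddSubmonoid.subset_closure (by simp [hS])
  have h3 : (3 + 6 * τ) ∈ AddSubmonoid.closure S := AddSubmonoid.subset_closure (by simp [hS])
  have h4 : (4 + 6 * τ) ∈ AddSubmonoid.closure S := AddSubmonoid.subset_closure (by simp [hS])
  have hmul : ∀ k : ℕ, 6 * k ∈ AddSubmonoid.closure S := by
    intro k
    have := nsmul_mem h6 k
    simpa [smul_eq_mul, mul_comm] using this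
  constructor
  · ext x
    simp only [Set.mem_iUnion, Fin.exists_fin_succ_pi]
    constructor
    · intro hx
      have key : x % 6 = 0 ∨ (x % 6 = 1 ∧ 1 + 6 * τ ≤ x) ∨ (x % 6 = 2 ∧ 2 + 6 * τ ≤ x)
          ∨ (x % 6 = 3 ∧ 3 + 6 * τ ≤ x) ∨ (x % 6 = 4 ∧ 4 + 6 * τ ≤ x)
          ∨ (x % 6 = 5 ∧ 5 + 12 * τ ≤ x) := by
        induction hx using AddSubmonoid.closure_induction with
        | mem y hy => simp [hS] at hy; omega
        | zero => omega
        | add a b _ _ ha hb => omega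
      rcases key with h | h | h | h | h | h
      · exact ⟨0, ⟨x / 6, by omega⟩⟩
      · exact ⟨1, ⟨(x - 1 - 6 * τ) / 6, by omega⟩⟩
      · exact ⟨2, ⟨(x - 2 - 6 * τ) / 6, by omega⟩⟩
      · exact ⟨3, ⟨(x - 3 - 6 * τ) / 6, by omega⟩⟩
      · exact ⟨4, ⟨(x - 4 - 6 * τ) / 6, by omega⟩⟩
      · exact ⟨5, ⟨(x - 5 - 12 * τ) / 6, by omega⟩⟩
    · rintro ⟨i, hi⟩
      fin_cases i <;> simp at hi <;> obtain ⟨k, rfl⟩ := hi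
      · exact hmul k
      · exact AddSubmonoid.add_mem _ h1 (hmul k)
      · exact AddSubmonoid.add_mem _ h2 (hmul k)
      · exact AddSubmonoid.add_mem _ h3 (hmul k)
      · exact AddSubmonoid.add_mem _ h4 (hmul k)
      · have : 5 + 12 * τ + 6 * k = (1 + 6 * τ) + ((4 + 6 * τ) + 6 * k) := by ring
        rw [this]
        exact AddSubmonoid.add_mem _ h1 (AddSubmonoid.add_mem _ h4 (hmul k))
  · intro i j hij
    fin_cases i <;> fin_cases j <;>
      first
      | exact absurd rfl hij
      | · rw [Function.onFun, Set.disjoint_left]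
          rintro x hx1 hx2
          simp only [Matrix.cons_val_zero, Matrix.cons_val_one, Matrix.head_cons,
            Matrix.cons_val_two, Matrix.tail_cons, Matrix.cons_val_three,
            Matrix.cons_val_four, Matrix.cons_val_fin_one, Fin.mk_zero, Fin.mk_one,
            Matrix.cons_val', Matrix.cons_val_succ, Set.mem_setOf_eq] at hx1 hx2
          obtain ⟨k, rfl⟩ := hx1
          obtain ⟨m, hm⟩ := hx2
          omega
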